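/- Let S_n (n ≥ 5) act on V = ℂ^n by permuting coordinates, and for a 5-cycle g define the skew-symmetric bilinear form κ^C_g on V by the matrix (a-b)²([g] - [g]ᵀ - 2[g²] + 2[g²]ᵀ), where [g] is the permutation matrix of g. Then κ^C_g vanishes whenever one argument lies in V^g, κ^C_g(e_i, g·e_i) = -(a-b)² and κ^C_g(e_i, g²·e_i) = 2(a-b)² for e_i ∉ V^g, and the family (κ^C_g) indexed by 5-cycles is S_n-invariant: κ^C_{hgh⁻¹}(h·u, h·v) = κ^C_g(u, v). -/

import Mathlib

/-- The action of a permutation on `ℂ^n` by permuting coordinates. -/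
noncomputable def permAct {n : ℕ} (σ : Equiv.Perm (Fin n)) (v : Fin n → ℂ) : Fin n → ℂ :=
  fun i => v (σ⁻¹ i)

/-- The fixed point space of a set of permutations acting on `ℂ^n`. -/
noncomputable def fixedSpace {n : ℕ} (S : Set (Equiv.Perm (Fin n))) : Submodule ℂ (Fin n → ℂ) where
  carrier := {v | ∀ g ∈ S, ∀ i, v (g i) = v i}
  add_mem' := fun ha hb g hg i => by simp [ha g hg i, hb g hg i]
  zero_mem' := fun g hg i => rfl
  smul_mem' := fun c v hv g hg i => by simp [hv g hg i]

/-- For a 5-cycle `g` in `Sₙ` (n ≥ 5), the skew-symmetric bilinear form with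
matrix `(a-b)²([g] - [g]ᵀ - 2[g²] + 2[g²]ᵀ)` vanishes when an argument lies in
`V^g`, satisfies `κ^C_g(e_i, g·e_i) = -(a-b)²` and `κ^C_g(e_i, g²·e_i) = 2(a-b)²`
for `e_i ∉ V^g`, and the family indexed by 5-cycles is `Sₙ`-invariant. -/
theorem stmt16 (n : ℕ) (hn : 5 ≤ n) (a b : ℂ) :
    -- matrix (a-b)^2([g] - [g]ᵀ - 2[g²] + 2[g²]ᵀ), where [g]_{ij} = 1 iff g j = i
    let M : Equiv.Perm (Fin n) → Fin n → Fin n → ℂ := fun g i j =>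
      (a - b) ^ 2 * ((if g j = i then 1 else 0) - (if g i = j then 1 else 0)
        - 2 * (if (g * g) j = i then 1 else 0) + 2 * (if (g * g) i = j then 1 else 0))
    let κC : Equiv.Perm (Fin n) → (Fin n → ℂ) → (Fin n → ℂ) → ℂ := fun g u v =>
      ∑ i, ∑ j, u i * v j * M g i j
    let e : Fin n → (Fin n → ℂ) := fun i => Pi.single i 1
    ∀ g : Equiv.Perm (Fin n), g.cycleType = {5} →
      (∀ v ∈ fixedSpace {g}, ∀ u : Fin n → ℂ, κC g v u = 0 ∧ κC g u v = 0)
        ∧ (∀ i : Fin n, g i ≠ i →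
            κC g (e i) (e (g i)) = -(a - b) ^ 2
              ∧ κC g (e i) (e (g (g i))) = 2 * (a - b) ^ 2)
        ∧ (∀ (h : Equiv.Perm (Fin n)) (u v : Fin n → ℂ),
            κC (h * g * h⁻¹) (permAct h u) (permAct h v) = κC g u v) := by
  intro M κC e g hg
  have hord : orderOf g = 5 := by
    rw [← Equiv.Perm.lcm_cycleType, hg]; simp
  have hpow5 : g ^ 5 = 1 := by rw [← hord]; exact pow_orderOf_eq_one g
  have h5 : ∀ x : Fin n, g (g (g (g (g x)))) = x := by
    intro x
    have hx : (g ^ 5) x = x := by rw [hpow5]; rfl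
    simpa [pow_succ, Equiv.Perm.mul_apply] using hx
  -- collapse the inner sum (key2)
  have key2 : ∀ (σ : Equiv.Perm (Fin n)) (u v : Fin n → ℂ),
      κC σ u v = ∑ i, u i * ((a - b) ^ 2 *
        (v (σ⁻¹ i) - v (σ i) - 2 * v (σ⁻¹ (σ⁻¹ i)) + 2 * v (σ (σ i)))) := by
    intro σ u v
    refine Finset.sum_congr rfl fun i _ => ?_
    simp only [M, Equiv.Perm.mul_apply,
      show ∀ j, ((σ j = i) = (j = σ⁻¹ i)) from fun j => by aesop,
      show ∀ j, ((σ j = σ⁻¹ i) = (j = σ⁻¹ (σ⁻¹ i))) from fun j =>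
        propext ⟨fun h => by simp [← h], fun h => by simp [h]⟩,
      show ∀ j, ((σ i = j) = (j = σ i)) from fun j => by aesop,
      show ∀ j, ((σ (σ i) = j) = (j = σ (σ i))) from fun j => by aesop]
    simp only [mul_sub, mul_add, mul_ite, mul_one, mul_zero, Finset.sum_sub_distrib,
      Finset.sum_add_distrib, Finset.sum_ite_eq', Finset.mem_univ, if_true]
    ring
  -- collapse the outer sum (key1)
  have key1 : ∀ (σ : Equiv.Perm (Fin n)) (u v : Fin n → ℂ),
      κC σ u v = ∑ j, ((a - b) ^ 2 *
        (u (σ j) - u (σ⁻¹ j) - 2 * u (σ (σ j)) + 2 * u (σ⁻¹ (σ⁻¹ j)))) * v j := by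
    intro σ u v
    rw [show κC σ u v = ∑ j, ∑ i, u i * v j * M σ i j from Finset.sum_comm]
    refine Finset.sum_congr rfl fun j _ => ?_
    simp only [M, Equiv.Perm.mul_apply,
      show ∀ i, ((σ j = i) = (i = σ j)) from fun i => by aesop,
      show ∀ i, ((σ i = j) = (i = σ⁻¹ j)) from fun i =>
        propext ⟨fun h => by simp [← h], fun h => by simp [h]⟩,
      show ∀ i, ((σ (σ j) = i) = (i = σ (σ j))) from fun i => by aesop,
      show ∀ i, ((σ i = σ⁻¹ j) = (i = σ⁻¹ (σ⁻¹ j))) from fun i =>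
        propext ⟨fun h => by simp [← h], fun h => by simp [h]⟩]
    simp only [mul_sub, mul_add, mul_ite, mul_one, mul_zero, sub_mul, add_mul,
      ite_mul, zero_mul, one_mul, Finset.sum_sub_distrib,
      Finset.sum_add_distrib, Finset.sum_ite_eq', Finset.mem_univ, if_true]
    ring
  refine ⟨?_, ?_, ?_⟩
  · -- vanishing on the fixed space
    intro v hv u
    have hfix : ∀ i, v (g i) = v i := hv g rfl
    have hfix' : ∀ i, v (g⁻¹ i) = v i := fun i => by
      have := hfix (g⁻¹ i); simpa using this.symm
    constructor
    · rw [key1]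
      refine Finset.sum_eq_zero fun j _ => ?_
      simp only [hfix, hfix']
      ring
    · rw [key2]
      refine Finset.sum_eq_zero fun i _ => ?_
      simp only [hfix, hfix']
      ring
  · -- values on basis vectors
    intro i hi
    have κe : ∀ j : Fin n, κC g (e i) (e j) = M g i j := by
      intro j
      have h1 : ∀ b, b ≠ i → (∑ j', (e i) b * (e j) j' * M g b j') = 0 := by
        intro c hc; simp [e, Pi.single_apply, hc]
      rw [show κC g (e i) (e j) = ∑ i', ∑ j', (e i) i' * (e j) j' * M g i' j' from rfl,
        Fintype.sum_eq_single i h1]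
      have h2 : ∀ c, c ≠ j → (e i) i * (e j) c * M g i c = 0 := by
        intro c hc; simp [e, Pi.single_apply, hc]
      rw [Fintype.sum_eq_single j h2]
      simp [e]
    have f2 : g (g i) ≠ i := by
      intro h2
      have c := congrArg g (congrArg g (congrArg g h2))
      rw [h5 i] at c
      rw [h2] at c
      exact hi c.symm
    have f3 : g (g (g i)) ≠ i := by
      intro h3
      have c := congrArg g (congrArg g h3)
      rw [h5 i] at c
      exact hi ((congrArg g c).trans h3)
    have f4 : g (g (g (g i))) ≠ i := by
      intro h4
      have c := congrArg g h4
      rw [h5 i] at c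
      exact hi c.symm
    constructor
    · rw [κe]
      simp only [M, Equiv.Perm.mul_apply]
      simp only [f2, f3, f4, if_false, if_true,
        (show ¬ g (g i) = g i from fun h => hi (g.injective h)),
        (show ¬ g i = g (g i) from fun h => hi (g.injective h).symm)]
      ring
    · rw [κe]
      simp only [M, Equiv.Perm.mul_apply]
      simp only [f2, f3, f4, if_false, if_true,
        (show ¬ g (g i) = g i from fun h => hi (g.injective h)),
        (show ¬ g i = g (g i) from fun h => hi (g.injective h).symm)]
      ring
  · -- invariance
    intro h u v
    refine (Fintype.sum_equiv h _ _ fun i => ?_).symm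
    refine Fintype.sum_equiv h _ _ fun j => ?_
    simp only [M, permAct, Equiv.Perm.mul_apply, Equiv.Perm.coe_inv, Equiv.symm_apply_apply,
      EmbeddingLike.apply_eq_iff_eq]
    congr
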